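/- Let 𝒳 be a finite field with q elements, 𝒴 a finite set, and (X,Y) a random vector with joint distribution P on 𝒳×𝒴. For every ε>0, every δ>0, and every positive integer t, there exists an integer m₀ such that for every m ≥ m₀, setting n = t·2^m, there exist a positive integer M, an encoder f : 𝒳ⁿ → Fin M, and a decoder g : Fin M × 𝒴ⁿ → 𝒳ⁿ such that H_q(X|Y) < (log M)/(n·log q) < H_q(X|Y) + δ and Pr[X^{1:n} ≠ g(f(X^{1:n}), Y^{1:n})] < ε, where (X^{1:n}, Y^{1:n}) denotes n i.i.d. copies of (X,Y). -/

import Mathlib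

open scoped BigOperators

/-- Shannon entropy (in nats) of a probability mass function on a finite type. -/
noncomputable def pmfEntropy {α : Type} [Fintype α] (Q : PMF α) : ℝ :=
  ∑ a, Real.negMulLog ((Q a).toReal)

open Classical in
/-- Probability of the event `E` under `n` i.i.d. copies of a distribution `P`
on a finite alphabet. -/
noncomputable def iidProb {α : Type} [Fintype α] (P : PMF α) (n : ℕ)
    (E : (Fin n → α) → Prop) : ℝ :=
  ∑ ω : Fin n → α, if E ω then ∏ i, (P (ω i)).toReal else 0

/-- Conditional entropy `H_q(X | Y)` (in base `q = |𝓧|`), computed as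
`(H(X, Y) - H(Y)) / log q` from the joint distribution `P` of `(X, Y)`. -/
noncomputable def condEntropyQ {𝓧 𝓨 : Type} [Fintype 𝓧] [Fintype 𝓨]
    (P : PMF (𝓧 × 𝓨)) : ℝ :=
  (pmfEntropy P - pmfEntropy (P.map Prod.snd)) / Real.log (Fintype.card 𝓧)


open scoped BigOperators
open Finset

namespace SWAux

variable {𝓧 𝓨 : Type} [Fintype 𝓧] [Fintype 𝓨]

noncomputable def pp (P : PMF (𝓧 × 𝓨)) (a : 𝓧 × 𝓨) : ℝ := (P a).toReal
noncomputable def pY (P : PMF (𝓧 × 𝓨)) (y : 𝓨) : ℝ := ∑ x, pp P (x, y)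
noncomputable def Z (P : PMF (𝓧 × 𝓨)) (a : 𝓧 × 𝓨) : ℝ :=
  Real.log (pY P a.2) - Real.log (pp P a)
noncomputable def hZ (P : PMF (𝓧 × 𝓨)) : ℝ := ∑ a, pp P a * Z P a
noncomputable def vZ (P : PMF (𝓧 × 𝓨)) : ℝ := ∑ a, pp P a * (Z P a - hZ P) ^ 2

variable (P : PMF (𝓧 × 𝓨))

omit [Fintype 𝓧] [Fintype 𝓨] in
lemma pp_nonneg (a) : 0 ≤ pp P a := ENNReal.toReal_nonneg

lemma sum_pp : ∑ a, pp P a = 1 := by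
  have h := P.tsum_coe
  rw [tsum_fintype] at h
  have := ENNReal.toReal_sum (s := univ) (f := fun a => P a)
    (fun a _ => (PMF.apply_ne_top P a))
  rw [h] at this
  simpa [pp] using this.symm

lemma pp_le_pY (a : 𝓧 × 𝓨) : pp P a ≤ pY P a.2 := by
  obtain ⟨x, y⟩ := a
  exact Finset.single_le_sum (f := fun x => pp P (x, y))
    (fun x _ => pp_nonneg P _) (mem_univ x)

lemma pY_nonneg (y) : 0 ≤ pY P y := Finset.sum_nonneg fun x _ => pp_nonneg P _

lemma pY_pos_of_pp (a : 𝓧 × 𝓨) (h : 0 < pp P a) : 0 < pY P a.2 :=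
  lt_of_lt_of_le h (pp_le_pY P a)

lemma Z_nonneg_of_pos (a : 𝓧 × 𝓨) (h : 0 < pp P a) : 0 ≤ Z P a :=
  sub_nonneg.2 (Real.log_le_log h (pp_le_pY P a))

lemma hZ_nonneg : 0 ≤ hZ P := by
  refine Finset.sum_nonneg fun a _ => ?_
  rcases eq_or_lt_of_le (pp_nonneg P a) with h | h
  · simp [← h]
  · exact mul_nonneg h.le (Z_nonneg_of_pos P a h)

lemma map_snd_toReal (y : 𝓨) : ((P.map Prod.snd) y).toReal = pY P y := by
  classical
  rw [PMF.map_apply, tsum_fintype]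
  rw [ENNReal.toReal_sum (fun a _ => by split <;> simp [PMF.apply_ne_top])]
  simp only [apply_ite ENNReal.toReal, ENNReal.toReal_zero]
  rw [Fintype.sum_prod_type]
  rw [pY]
  congr 1; funext x
  simp [pp, eq_comm]

lemma pmf_diff_eq_hZ : pmfEntropy P - pmfEntropy (P.map Prod.snd) = hZ P := by
  classical
  have h2 : pmfEntropy (P.map Prod.snd) = ∑ y, Real.negMulLog (pY P y) := by
    unfold pmfEntropy; exact Finset.sum_congr rfl fun y _ => by rw [map_snd_toReal]
  have h3 : ∑ y, Real.negMulLog (pY P y) = ∑ a : 𝓧 × 𝓨, -(pp P a * Real.log (pY P a.2)) := by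
    rw [Fintype.sum_prod_type_right]
    refine Finset.sum_congr rfl fun y _ => ?_
    rw [Real.negMulLog, pY, neg_mul, Finset.sum_mul, ← Finset.sum_neg_distrib]
    rfl
  rw [pmfEntropy, h2, h3, hZ, ← Finset.sum_sub_distrib]
  refine Finset.sum_congr rfl fun a _ => ?_
  simp only [Real.negMulLog, Z, pp]
  ring

end SWAux

namespace SWAux

section Product
variable {α : Type} [Fintype α] {n : ℕ}

lemma sum_prod_pi (g : Fin n → α → ℝ) :
    ∑ ω : Fin n → α, ∏ i, g i (ω i) = ∏ i, ∑ a, g i a := by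
  classical
  rw [Finset.prod_univ_sum, Fintype.piFinset_univ]

lemma iid_cross (p W : α → ℝ) (hp1 : ∑ a, p a = 1) (hW : ∑ a, p a * W a = 0)
    (i j : Fin n) :
    ∑ ω : Fin n → α, (∏ k, p (ω k)) * (W (ω i) * W (ω j)) =
      if i = j then ∑ a, p a * (W a * W a) else 0 := by
  classical
  have key : ∀ ω : Fin n → α,
      (∏ k, p (ω k)) * (W (ω i) * W (ω j)) =
      ∏ k, (p (ω k) * (if k = i then W (ω k) else 1) * (if k = j then W (ω k) else 1)) := by
    intro ω
    rw [Finset.prod_mul_distrib, Finset.prod_mul_distrib]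
    rw [Finset.prod_ite_eq' univ i (fun k => W (ω k)),
      Finset.prod_ite_eq' univ j (fun k => W (ω k))]
    simp [mul_assoc]
  rw [Finset.sum_congr rfl (fun ω _ => key ω),
    sum_prod_pi (fun k a => p a * (if k = i then W a else 1) * (if k = j then W a else 1))]
  by_cases hij : i = j
  · subst hij
    rw [if_pos rfl, Finset.prod_eq_single i]
    · refine Finset.sum_congr rfl fun a _ => by simp [mul_assoc]
    · intro k _ hk
      simp [hk, hp1]
    · simp
  · rw [if_neg hij]
    refine Finset.prod_eq_zero (Finset.mem_univ i) ?_
    simp only [if_pos rfl, if_neg hij, mul_one]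
    exact hW

lemma iid_variance (p W : α → ℝ) (hp1 : ∑ a, p a = 1) (hW : ∑ a, p a * W a = 0) :
    ∑ ω : Fin n → α, (∏ k, p (ω k)) * (∑ i, W (ω i)) ^ 2
      = n * ∑ a, p a * (W a * W a) := by
  classical
  have expand : ∀ ω : Fin n → α, (∏ k, p (ω k)) * (∑ i, W (ω i)) ^ 2
      = ∑ i, ∑ j, (∏ k, p (ω k)) * (W (ω i) * W (ω j)) := by
    intro ω
    rw [sq, Finset.sum_mul_sum, Finset.mul_sum]
    exact Finset.sum_congr rfl fun i _ => by rw [Finset.mul_sum]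
  rw [Finset.sum_congr rfl (fun ω _ => expand ω)]
  rw [Finset.sum_comm]
  have : ∀ i : Fin n, ∑ ω : Fin n → α, ∑ j, (∏ k, p (ω k)) * (W (ω i) * W (ω j))
      = ∑ j, ∑ ω : Fin n → α, (∏ k, p (ω k)) * (W (ω i) * W (ω j)) :=
    fun i => Finset.sum_comm
  rw [Finset.sum_congr rfl (fun i _ => this i)]
  simp_rw [iid_cross p W hp1 hW]
  simp [Finset.sum_ite_eq, mul_comm]

lemma sum_Pn (p : α → ℝ) (hp1 : ∑ a, p a = 1) :
    ∑ ω : Fin n → α, ∏ k, p (ω k) = 1 := by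
  rw [sum_prod_pi (fun _ a => p a)]
  simp [hp1]

lemma chebyshev (p W : α → ℝ) (hp : ∀ a, 0 ≤ p a) (hp1 : ∑ a, p a = 1)
    (hW : ∑ a, p a * W a = 0) {η : ℝ} (hη : 0 < η) (hn : 0 < n) :
    ∑ ω : Fin n → α, (if (n : ℝ) * η < ∑ i, W (ω i) then ∏ k, p (ω k) else 0)
      ≤ (∑ a, p a * (W a * W a)) / (n * η ^ 2) := by
  classical
  have hnη : (0:ℝ) < (n:ℝ) * η := by positivity
  have key : ∀ ω : Fin n → α,
      (if (n : ℝ) * η < ∑ i, W (ω i) then ∏ k, p (ω k) else 0)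
        ≤ (∏ k, p (ω k)) * (∑ i, W (ω i)) ^ 2 / ((n:ℝ) * η) ^ 2 := by
    intro ω
    have hPn : 0 ≤ ∏ k, p (ω k) := Finset.prod_nonneg fun k _ => hp _
    split
    · rename_i hcond
      have h1 : ((n:ℝ) * η) ^ 2 ≤ (∑ i, W (ω i)) ^ 2 := by
        apply sq_le_sq'
        · nlinarith
        · exact hcond.le
      rw [le_div_iff₀ (by positivity)]
      nlinarith
    · positivity
  calc ∑ ω : Fin n → α, (if (n : ℝ) * η < ∑ i, W (ω i) then ∏ k, p (ω k) else 0)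
      ≤ ∑ ω : Fin n → α, (∏ k, p (ω k)) * (∑ i, W (ω i)) ^ 2 / ((n:ℝ) * η) ^ 2 :=
        Finset.sum_le_sum fun ω _ => key ω
    _ = (∑ ω : Fin n → α, (∏ k, p (ω k)) * (∑ i, W (ω i)) ^ 2) / ((n:ℝ) * η) ^ 2 := by
        rw [Finset.sum_div]
    _ = (n * ∑ a, p a * (W a * W a)) / ((n:ℝ) * η) ^ 2 := by
        rw [iid_variance p W hp1 hW]
    _ = (∑ a, p a * (W a * W a)) / (n * η ^ 2) := by
        field_simp

end Product
end SWAux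

namespace SWAux
section Typical
variable {𝓧 𝓨 : Type} [Fintype 𝓧] [Fintype 𝓨] (P : PMF (𝓧 × 𝓨))

noncomputable def cc (a : 𝓧 × 𝓨) : ℝ := if 0 < pp P a then pp P a / pY P a.2 else 0

lemma cc_nonneg (a) : 0 ≤ cc P a := by
  unfold cc; split
  · exact div_nonneg (pp_nonneg P a) (pY_nonneg P _)
  · exact le_refl 0

lemma sum_cc_le_one (y : 𝓨) : ∑ x, cc P (x, y) ≤ 1 := by
  by_cases hy : 0 < pY P y
  · have hle : ∀ x : 𝓧, cc P (x, y) ≤ pp P (x, y) / pY P y := by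
      intro x; unfold cc; split
      · exact le_refl _
      · exact div_nonneg (pp_nonneg P _) (pY_nonneg P _)
    calc ∑ x, cc P (x, y) ≤ ∑ x, pp P (x, y) / pY P y := Finset.sum_le_sum fun x _ => hle x
      _ = pY P y / pY P y := by rw [← Finset.sum_div]; rfl
      _ = 1 := div_self hy.ne'
  · have hy0 : pY P y = 0 := le_antisymm (not_lt.1 hy) (pY_nonneg P y)
    have hx0 : ∀ x : 𝓧, pp P (x, y) = 0 := by
      intro x
      have h1 : pp P (x, y) ≤ pY P y := pp_le_pY P (x, y)
      have := pp_nonneg P (x, y)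
      linarith [hy0 ▸ h1]
    have : ∀ x : 𝓧, cc P (x, y) = 0 := by
      intro x; unfold cc; rw [if_neg]; rw [hx0 x]; exact lt_irrefl 0
    simp [this]

lemma cc_eq_exp (a) (h : 0 < pp P a) : cc P a = Real.exp (-(Z P a)) := by
  have hpY := pY_pos_of_pp P a h
  rw [cc, if_pos h, Z, neg_sub, Real.exp_sub, Real.exp_log h, Real.exp_log hpY]

noncomputable def Tset (n : ℕ) (R : ℝ) (yv : Fin n → 𝓨) : Finset (Fin n → 𝓧) := by
  classical
  exact Finset.univ.filter
    (fun x => (∀ i, 0 < pp P (x i, yv i)) ∧ ∑ i, Z P (x i, yv i) ≤ R)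

lemma card_Tset (n : ℕ) (R : ℝ) (yv : Fin n → 𝓨) :
    ((Tset P n R yv).card : ℝ) ≤ Real.exp R := by
  classical
  have h1 : ∀ x ∈ Tset P n R yv, Real.exp (-R) ≤ ∏ i, cc P (x i, yv i) := by
    intro x hx
    rw [Tset] at hx
    simp only [Finset.mem_filter] at hx
    obtain ⟨-, hpos, hsum⟩ := hx
    have heq : ∏ i, cc P (x i, yv i) = Real.exp (-(∑ i, Z P (x i, yv i))) := by
      rw [Finset.prod_congr rfl (fun i _ => cc_eq_exp P _ (hpos i)),
        ← Real.exp_sum]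
      congr 1
      rw [← Finset.sum_neg_distrib]
    rw [heq]
    exact Real.exp_le_exp.2 (neg_le_neg hsum)
  have h2 : ((Tset P n R yv).card : ℝ) * Real.exp (-R)
      ≤ ∑ x ∈ Tset P n R yv, ∏ i, cc P (x i, yv i) := by
    have := Finset.sum_le_sum h1
    rwa [Finset.sum_const, nsmul_eq_mul] at this
  have h3 : ∑ x ∈ Tset P n R yv, ∏ i, cc P (x i, yv i)
      ≤ ∑ x : Fin n → 𝓧, ∏ i, cc P (x i, yv i) := by
    apply Finset.sum_le_sum_of_subset_of_nonneg (Finset.filter_subset _ _)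
    exact fun x _ _ => Finset.prod_nonneg fun i _ => cc_nonneg P _
  have h4 : ∑ x : Fin n → 𝓧, ∏ i, cc P (x i, yv i) ≤ 1 := by
    rw [sum_prod_pi (fun i x => cc P (x, yv i))]
    exact Finset.prod_le_one (fun i _ => Finset.sum_nonneg fun x _ => cc_nonneg P _)
      (fun i _ => sum_cc_le_one P (yv i))
  have h5 := le_trans h2 (le_trans h3 h4)
  have hexp : (0:ℝ) < Real.exp (-R) := Real.exp_pos _
  calc ((Tset P n R yv).card : ℝ)
      = ((Tset P n R yv).card : ℝ) * Real.exp (-R) * Real.exp R := by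
        rw [mul_assoc, ← Real.exp_add, neg_add_cancel, Real.exp_zero, mul_one]
    _ ≤ 1 * Real.exp R := by
        exact mul_le_mul_of_nonneg_right h5 (Real.exp_pos R).le
    _ = Real.exp R := one_mul _

end Typical

section Binning
variable {β : Type} [Fintype β] [DecidableEq β]

lemma count_collision (M : ℕ) (hM : 0 < M) (x x' : β) (hne : x' ≠ x) :
    ∑ f : β → Fin M, (if f x' = f x then (1:ℝ) else 0)
      = (Fintype.card (β → Fin M) : ℝ) / M := by
  classical
  have e := (Equiv.funSplitAt x' (Fin M)).symm
  rw [← Equiv.sum_comp (Equiv.funSplitAt x' (Fin M)).symm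
    (fun f => if f x' = f x then (1:ℝ) else 0)]
  have happ : ∀ pr : Fin M × ({j // j ≠ x'} → Fin M),
      ((Equiv.funSplitAt x' (Fin M)).symm pr x' = (Equiv.funSplitAt x' (Fin M)).symm pr x)
        ↔ pr.1 = pr.2 ⟨x, hne.symm⟩ := by
    intro pr
    rw [Equiv.funSplitAt, Equiv.piSplitAt_symm_apply, Equiv.piSplitAt_symm_apply,
      dif_pos rfl, dif_neg hne.symm]
  simp only [happ]
  rw [Fintype.sum_prod_type]
  have hinner : ∀ v : Fin M, ∑ g : {j // j ≠ x'} → Fin M,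
      (if v = g ⟨x, hne.symm⟩ then (1:ℝ) else 0)
      = ∑ g : {j // j ≠ x'} → Fin M, (if g ⟨x, hne.symm⟩ = v then (1:ℝ) else 0) := by
    intro v; exact Finset.sum_congr rfl fun g _ => by simp [eq_comm]
  have houter : ∑ v : Fin M, ∑ g : {j // j ≠ x'} → Fin M,
      (if v = g ⟨x, hne.symm⟩ then (1:ℝ) else 0)
      = ∑ g : {j // j ≠ x'} → Fin M, ∑ v : Fin M, (if v = g ⟨x, hne.symm⟩ then (1:ℝ) else 0) :=
    Finset.sum_comm
  rw [houter]
  have : ∀ g : {j // j ≠ x'} → Fin M, ∑ v : Fin M,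
      (if v = g ⟨x, hne.symm⟩ then (1:ℝ) else 0) = 1 := by
    intro g; simp
  rw [Finset.sum_congr rfl (fun g _ => this g), Finset.sum_const, nsmul_eq_mul, mul_one,
    Finset.card_univ, Fintype.card_fun, Fintype.card_fun, Fintype.card_fin]
  have hcards : Fintype.card {j // j ≠ x'} = Fintype.card β - 1 := by
    simp [Fintype.card_subtype_compl]
  rw [hcards]
  have hβ : 1 ≤ Fintype.card β := Fintype.card_pos_iff.2 ⟨x⟩
  rw [eq_div_iff (by positivity : (M:ℝ) ≠ 0)]
  rw [← Nat.cast_mul, ← pow_succ, Nat.sub_add_cancel hβ]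

lemma count_exists_collision (M : ℕ) (hM : 0 < M) (x : β) (S : Finset β) :
    ∑ f : β → Fin M, (if ∃ x' ∈ S, x' ≠ x ∧ f x' = f x then (1:ℝ) else 0)
      ≤ (Fintype.card (β → Fin M) : ℝ) * S.card / M := by
  classical
  have step : ∀ f : β → Fin M, (if ∃ x' ∈ S, x' ≠ x ∧ f x' = f x then (1:ℝ) else 0)
      ≤ ∑ x' ∈ S, (if x' ≠ x ∧ f x' = f x then (1:ℝ) else 0) := by
    intro f
    split
    · rename_i hex
      obtain ⟨x', hx'S, h1, h2⟩ := hex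
      calc (1:ℝ) = (if x' ≠ x ∧ f x' = f x then (1:ℝ) else 0) := by rw [if_pos ⟨h1, h2⟩]
        _ ≤ _ := Finset.single_le_sum (f := fun x' => if x' ≠ x ∧ f x' = f x then (1:ℝ) else 0)
            (fun _ _ => by positivity) hx'S
    · exact Finset.sum_nonneg fun _ _ => by positivity
  calc ∑ f : β → Fin M, (if ∃ x' ∈ S, x' ≠ x ∧ f x' = f x then (1:ℝ) else 0)
      ≤ ∑ f : β → Fin M, ∑ x' ∈ S, (if x' ≠ x ∧ f x' = f x then (1:ℝ) else 0) :=
        Finset.sum_le_sum fun f _ => step f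
    _ = ∑ x' ∈ S, ∑ f : β → Fin M, (if x' ≠ x ∧ f x' = f x then (1:ℝ) else 0) :=
        Finset.sum_comm
    _ ≤ ∑ x' ∈ S, (Fintype.card (β → Fin M) : ℝ) / M := by
        refine Finset.sum_le_sum fun x' _ => ?_
        by_cases hx : x' = x
        · simp only [hx, ne_eq, not_true_eq_false, false_and, if_false]
          simp only [Finset.sum_const_zero]
          positivity
        · have : ∀ f : β → Fin M, (if x' ≠ x ∧ f x' = f x then (1:ℝ) else 0)
              = (if f x' = f x then (1:ℝ) else 0) := by
            intro f; by_cases hf : f x' = f x <;> simp [hf, hx]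
          rw [Finset.sum_congr rfl (fun f _ => this f), count_collision M hM x x' hx]
    _ = (Fintype.card (β → Fin M) : ℝ) * S.card / M := by
        rw [Finset.sum_const, nsmul_eq_mul]
        ring

end Binning
end SWAux

namespace SWAux

set_option maxHeartbeats 1000000 in
lemma main_n {𝓧 : Type} [Field 𝓧] [Fintype 𝓧] {𝓨 : Type} [Fintype 𝓨]
    (P : PMF (𝓧 × 𝓨)) {ε δ : ℝ} (hε : 0 < ε) (hδ : 0 < δ)
    (n : ℕ) (hn : 0 < n)
    (big1 : (∑ a, pp P a * ((Z P a - hZ P) * (Z P a - hZ P)))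
        / (n * (δ * Real.log (Fintype.card 𝓧) / 4) ^ 2) < ε / 2)
    (big2 : Real.exp (-((n : ℝ) * (δ * Real.log (Fintype.card 𝓧) / 4))) < ε / 2)
    (big3 : Real.log 2 < (n : ℝ) * (δ * Real.log (Fintype.card 𝓧) / 2)) :
    ∃ (M : ℕ) (f : (Fin n → 𝓧) → Fin M)
        (g : Fin M × (Fin n → 𝓨) → (Fin n → 𝓧)),
        0 < M ∧
        condEntropyQ P < Real.log M / ((n : ℕ) * Real.log (Fintype.card 𝓧)) ∧
        Real.log M / ((n : ℕ) * Real.log (Fintype.card 𝓧)) < condEntropyQ P + δ ∧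
        iidProb P n
          (fun ω => (fun i => (ω i).1)
            ≠ g (f (fun i => (ω i).1), fun i => (ω i).2)) < ε := by
  classical
  set L := Real.log (Fintype.card 𝓧) with hLdef
  have hq : 1 < Fintype.card 𝓧 := Fintype.one_lt_card
  have hL : 0 < L := Real.log_pos (by exact_mod_cast hq)
  have hnR : (0:ℝ) < n := by exact_mod_cast hn
  set η : ℝ := δ * L / 4 with hηdef
  have hηpos : 0 < η := by positivity
  have hh0 : 0 ≤ hZ P := hZ_nonneg P
  set R : ℝ := n * hZ P + n * η with hRdef
  set x₀ : ℝ := Real.exp (n * (hZ P + δ * L / 2)) with hx₀def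
  have hx₀1 : 1 ≤ x₀ := Real.one_le_exp (by positivity)
  have hx₀pos : 0 < x₀ := lt_of_lt_of_le one_pos hx₀1
  obtain ⟨M, hM0, hMlb, hMub⟩ : ∃ M : ℕ, 0 < M ∧ x₀ ≤ M ∧ (M : ℝ) ≤ 2 * x₀ := by
    refine ⟨⌈x₀⌉₊, Nat.ceil_pos.2 hx₀pos, Nat.le_ceil x₀, ?_⟩
    have h := Nat.ceil_lt_add_one hx₀pos.le
    linarith
  have hMR : (0:ℝ) < M := by exact_mod_cast hM0
  have hlogM_lb : (n:ℝ) * (hZ P + δ * L / 2) ≤ Real.log M := by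
    calc (n:ℝ) * (hZ P + δ * L / 2) = Real.log x₀ := (Real.log_exp _).symm
      _ ≤ Real.log M := Real.log_le_log hx₀pos hMlb
  have hlogM_ub : Real.log M ≤ Real.log 2 + (n:ℝ) * (hZ P + δ * L / 2) := by
    calc Real.log M ≤ Real.log (2 * x₀) := Real.log_le_log hMR hMub
      _ = Real.log 2 + Real.log x₀ := Real.log_mul two_ne_zero hx₀pos.ne'
      _ = Real.log 2 + (n:ℝ) * (hZ P + δ * L / 2) := by rw [Real.log_exp]
  have hcond : condEntropyQ P = hZ P / L := by
    rw [condEntropyQ, pmf_diff_eq_hZ]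
  have hnL : (0:ℝ) < (n:ℝ) * L := by positivity
  -- rate bounds
  have rate_lb : condEntropyQ P < Real.log M / ((n : ℕ) * L) := by
    rw [hcond, div_lt_div_iff₀ hL hnL]
    have h1 : (n:ℝ) * hZ P < Real.log M := by nlinarith
    nlinarith
  have rate_ub : Real.log M / ((n : ℕ) * L) < condEntropyQ P + δ := by
    rw [hcond]
    have h1 : Real.log M < (n:ℝ) * hZ P + (n:ℝ) * (δ * L) := by nlinarith
    rw [div_lt_iff₀ hnL]
    have h2 : (hZ P / L + δ) * ((n:ℝ) * L) = (n:ℝ) * hZ P + (n:ℝ) * (δ * L) := by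
      field_simp
    rw [h2]
    exact h1
  -- probability
  set W : 𝓧 × 𝓨 → ℝ := fun a => Z P a - hZ P with hWdef
  have hp1 : ∑ a, pp P a = 1 := sum_pp P
  have hWmean : ∑ a, pp P a * W a = 0 := by
    simp only [hWdef, mul_sub]
    rw [Finset.sum_sub_distrib, ← Finset.sum_mul, hp1, one_mul]
    exact sub_self _
  have cheb := chebyshev (pp P) W (pp_nonneg P) hp1 hWmean hηpos hn
  have hsumZ : ∀ ω : Fin n → (𝓧 × 𝓨), ∑ i, W (ω i) = (∑ i, Z P (ω i)) - n * hZ P := by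
    intro ω
    simp only [hWdef]
    rw [Finset.sum_sub_distrib, Finset.sum_const, Finset.card_univ, Fintype.card_fin,
      nsmul_eq_mul]
  -- average collision probability over random binning
  set Err2 : ((Fin n → 𝓧) → Fin M) → ℝ := fun f =>
    ∑ ω : Fin n → (𝓧 × 𝓨),
      (if ∃ x' ∈ Tset P n R (fun i => (ω i).2), x' ≠ (fun i => (ω i).1) ∧
          f x' = f (fun i => (ω i).1) then ∏ i, pp P (ω i) else 0) with hErr2def
  have havg : ∑ f : (Fin n → 𝓧) → Fin M, Err2 f
      ≤ (Fintype.card ((Fin n → 𝓧) → Fin M) : ℝ) * (Real.exp R / M) := by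
    simp only [hErr2def]
    rw [Finset.sum_comm]
    have inner : ∀ ω : Fin n → (𝓧 × 𝓨),
        ∑ f : (Fin n → 𝓧) → Fin M,
          (if ∃ x' ∈ Tset P n R (fun i => (ω i).2), x' ≠ (fun i => (ω i).1) ∧
              f x' = f (fun i => (ω i).1) then ∏ i, pp P (ω i) else 0)
        ≤ (∏ i, pp P (ω i)) * ((Fintype.card ((Fin n → 𝓧) → Fin M) : ℝ) * Real.exp R / M) := by
      intro ω
      have hPn : 0 ≤ ∏ i, pp P (ω i) := Finset.prod_nonneg fun i _ => pp_nonneg P _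
      have step1 : ∑ f : (Fin n → 𝓧) → Fin M,
          (if ∃ x' ∈ Tset P n R (fun i => (ω i).2), x' ≠ (fun i => (ω i).1) ∧
              f x' = f (fun i => (ω i).1) then ∏ i, pp P (ω i) else 0)
          = (∏ i, pp P (ω i)) * ∑ f : (Fin n → 𝓧) → Fin M,
            (if ∃ x' ∈ Tset P n R (fun i => (ω i).2), x' ≠ (fun i => (ω i).1) ∧
              f x' = f (fun i => (ω i).1) then (1:ℝ) else 0) := by
        rw [Finset.mul_sum]
        exact Finset.sum_congr rfl fun f _ => by split <;> simp
      rw [step1]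
      have step2 := count_exists_collision (β := Fin n → 𝓧) M hM0 (fun i => (ω i).1)
        (Tset P n R (fun i => (ω i).2))
      have step3 : ((Tset P n R (fun i => (ω i).2)).card : ℝ) ≤ Real.exp R :=
        card_Tset P n R _
      have step4 : (Fintype.card ((Fin n → 𝓧) → Fin M) : ℝ)
          * ((Tset P n R (fun i => (ω i).2)).card : ℝ) / M
          ≤ (Fintype.card ((Fin n → 𝓧) → Fin M) : ℝ) * Real.exp R / M := by
        gcongr
      exact mul_le_mul_of_nonneg_left (le_trans step2 step4) hPn
    refine le_trans (Finset.sum_le_sum fun ω _ => inner ω) ?_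
    rw [← Finset.sum_mul, sum_Pn (pp P) hp1, one_mul]
    ring_nf
    exact le_refl _
  -- choose a good binning f
  have hFne : (Finset.univ : Finset ((Fin n → 𝓧) → Fin M)).Nonempty := by
    have : Nonempty (Fin M) := ⟨⟨0, hM0⟩⟩
    exact Finset.univ_nonempty
  have hsum_le : ∑ f : (Fin n → 𝓧) → Fin M, Err2 f
      ≤ ∑ _f : (Fin n → 𝓧) → Fin M, (Real.exp R / M) := by
    rw [Finset.sum_const, nsmul_eq_mul, Finset.card_univ]
    exact havg
  obtain ⟨f, -, hf⟩ := Finset.exists_le_of_sum_le hFne hsum_le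
  -- the decoder
  set gdec : Fin M × (Fin n → 𝓨) → (Fin n → 𝓧) := fun bm =>
    if h : ∃ x, x ∈ Tset P n R bm.2 ∧ f x = bm.1 then h.choose else fun _ => 0
    with hgdecdef
  refine ⟨M, f, gdec, hM0, rate_lb, rate_ub, ?_⟩
  -- correctness of the decoder when typical and no collision
  have hgood : ∀ ω : Fin n → (𝓧 × 𝓨),
      ((fun i => (ω i).1) ≠ gdec (f (fun i => (ω i).1), fun i => (ω i).2)) →
      (∀ i, 0 < pp P (ω i)) → ((∑ i, Z P (ω i)) ≤ R) →
      (∃ x' ∈ Tset P n R (fun i => (ω i).2), x' ≠ (fun i => (ω i).1) ∧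
          f x' = f (fun i => (ω i).1)) := by
    intro ω hne hpos hsum
    set xv : Fin n → 𝓧 := fun i => (ω i).1 with hxv
    set yv : Fin n → 𝓨 := fun i => (ω i).2 with hyv
    have hx : xv ∈ Tset P n R yv := by
      rw [Tset]
      simp only [Finset.mem_filter, Finset.mem_univ, true_and]
      exact ⟨fun i => hpos i, hsum⟩
    have hEx : ∃ x, x ∈ Tset P n R yv ∧ f x = f xv := ⟨xv, hx, rfl⟩
    have hgval : gdec (f xv, yv) = hEx.choose := by
      show (if h : ∃ x, x ∈ Tset P n R yv ∧ f x = f xv then h.choose else fun _ => 0)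
        = hEx.choose
      rw [dif_pos hEx]
    have hspec := hEx.choose_spec
    refine ⟨hEx.choose, hspec.1, ?_, hspec.2⟩
    intro hcontra
    apply hne
    rw [hgval, hcontra]
  -- pointwise error bound
  have hpoint : ∀ ω : Fin n → (𝓧 × 𝓨),
      (if ((fun i => (ω i).1) ≠ gdec (f (fun i => (ω i).1), fun i => (ω i).2))
          then ∏ i, pp P (ω i) else 0)
      ≤ (if (n : ℝ) * η < ∑ i, W (ω i) then ∏ k, pp P (ω k) else 0)
        + (if ∃ x' ∈ Tset P n R (fun i => (ω i).2), x' ≠ (fun i => (ω i).1) ∧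
            f x' = f (fun i => (ω i).1) then ∏ i, pp P (ω i) else 0) := by
    intro ω
    have hPn : 0 ≤ ∏ i, pp P (ω i) := Finset.prod_nonneg fun i _ => pp_nonneg P _
    by_cases hE : (fun i => (ω i).1) ≠ gdec (f (fun i => (ω i).1), fun i => (ω i).2)
    · rw [if_pos hE]
      by_cases hA : (n : ℝ) * η < ∑ i, W (ω i)
      · rw [if_pos hA]
        have : (0:ℝ) ≤ (if ∃ x' ∈ Tset P n R (fun i => (ω i).2),
            x' ≠ (fun i => (ω i).1) ∧ f x' = f (fun i => (ω i).1)
            then ∏ i, pp P (ω i) else 0) := by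
          split
          · exact hPn
          · exact le_refl 0
        linarith
      · rw [if_neg hA]
        by_cases hposall : ∀ i, 0 < pp P (ω i)
        · have hsum : (∑ i, Z P (ω i)) ≤ R := by
            have h1 := hsumZ ω
            have h2 : ∑ i, W (ω i) ≤ (n : ℝ) * η := not_lt.1 hA
            rw [hRdef]; linarith
          rw [if_pos (hgood ω hE hposall hsum), zero_add]
        · push_neg at hposall
          obtain ⟨i₀, hi₀⟩ := hposall
          have : ∏ i, pp P (ω i) = 0 := by
            apply Finset.prod_eq_zero (Finset.mem_univ i₀)
            exact le_antisymm hi₀ (pp_nonneg P _)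
          rw [this]
          have e1 : (0:ℝ) ≤ (if (n : ℝ) * η < ∑ i, W (ω i) then ∏ k, pp P (ω k) else 0) := by
            split
            · exact hPn
            · exact le_refl 0
          have e2 : (0:ℝ) ≤ (if ∃ x' ∈ Tset P n R (fun i => (ω i).2),
              x' ≠ (fun i => (ω i).1) ∧ f x' = f (fun i => (ω i).1)
              then ∏ i, pp P (ω i) else 0) := by
            split
            · exact hPn
            · exact le_refl 0
          split
          · linarith
          · linarith
    · rw [if_neg hE]
      have h1 : (0:ℝ) ≤ (if (n : ℝ) * η < ∑ i, W (ω i) then ∏ k, pp P (ω k) else 0) := by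
        split
        · exact hPn
        · exact le_refl 0
      have h2 : (0:ℝ) ≤ (if ∃ x' ∈ Tset P n R (fun i => (ω i).2),
          x' ≠ (fun i => (ω i).1) ∧ f x' = f (fun i => (ω i).1)
          then ∏ i, pp P (ω i) else 0) := by
        split
        · exact hPn
        · exact le_refl 0
      linarith
  -- final assembly of probability bound
  have hiid : iidProb P n
      (fun ω => (fun i => (ω i).1)
        ≠ gdec (f (fun i => (ω i).1), fun i => (ω i).2))
      = ∑ ω : Fin n → (𝓧 × 𝓨),
        (if ((fun i => (ω i).1) ≠ gdec (f (fun i => (ω i).1), fun i => (ω i).2))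
          then ∏ i, pp P (ω i) else 0) := by
    rw [iidProb]
    refine Finset.sum_congr rfl fun ω _ => ?_
    unfold pp
    split_ifs <;> rfl
  rw [hiid]
  have hsplit : ∑ ω : Fin n → (𝓧 × 𝓨),
      (if ((fun i => (ω i).1) ≠ gdec (f (fun i => (ω i).1), fun i => (ω i).2))
        then ∏ i, pp P (ω i) else 0)
      ≤ (∑ ω : Fin n → (𝓧 × 𝓨),
          (if (n : ℝ) * η < ∑ i, W (ω i) then ∏ k, pp P (ω k) else 0)) + Err2 f := by
    rw [hErr2def, ← Finset.sum_add_distrib]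
    exact Finset.sum_le_sum fun ω _ => hpoint ω
  have hcoll : Err2 f < ε / 2 := by
    have hstep : Real.exp R / M ≤ Real.exp (-((n : ℝ) * (δ * L / 4))) := by
      have h1 : Real.exp R / (M : ℝ) ≤ Real.exp R / x₀ := by gcongr
      have h2 : Real.exp R / x₀ = Real.exp (-((n : ℝ) * (δ * L / 4))) := by
        rw [hx₀def, ← Real.exp_sub]
        congr 1
        rw [hRdef, hηdef]
        ring
      linarith
    calc Err2 f ≤ Real.exp R / M := hf
      _ ≤ Real.exp (-((n : ℝ) * (δ * L / 4))) := hstep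
      _ < ε / 2 := big2
  have hatyp : (∑ ω : Fin n → (𝓧 × 𝓨),
      (if (n : ℝ) * η < ∑ i, W (ω i) then ∏ k, pp P (ω k) else 0)) < ε / 2 := by
    calc (∑ ω : Fin n → (𝓧 × 𝓨),
        (if (n : ℝ) * η < ∑ i, W (ω i) then ∏ k, pp P (ω k) else 0))
        ≤ (∑ a, pp P a * (W a * W a)) / (n * η ^ 2) := cheb
      _ < ε / 2 := big1
  linarith [hsplit, hcoll, hatyp]

end SWAux

theorem source_coding_with_side_information_single_decoder
    {𝓧 : Type} [Field 𝓧] [Fintype 𝓧] {𝓨 : Type} [Fintype 𝓨]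
    (P : PMF (𝓧 × 𝓨)) {ε δ : ℝ} (hε : 0 < ε) (hδ : 0 < δ)
    (t : ℕ) (ht : 0 < t) :
    ∃ m₀ : ℕ, ∀ m : ℕ, m₀ ≤ m →
      ∃ (M : ℕ) (f : (Fin (t * 2 ^ m) → 𝓧) → Fin M)
        (g : Fin M × (Fin (t * 2 ^ m) → 𝓨) → (Fin (t * 2 ^ m) → 𝓧)),
        0 < M ∧
        condEntropyQ P < Real.log M / ((t * 2 ^ m : ℕ) * Real.log (Fintype.card 𝓧)) ∧
        Real.log M / ((t * 2 ^ m : ℕ) * Real.log (Fintype.card 𝓧)) < condEntropyQ P + δ ∧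
        iidProb P (t * 2 ^ m)
          (fun ω => (fun i => (ω i).1)
            ≠ g (f (fun i => (ω i).1), fun i => (ω i).2)) < ε := by
  classical
  have hq : 1 < Fintype.card 𝓧 := Fintype.one_lt_card
  set L := Real.log (Fintype.card 𝓧) with hLdef
  have hL : 0 < L := Real.log_pos (by exact_mod_cast hq)
  set η : ℝ := δ * L / 4 with hηdef
  have hηpos : 0 < η := by positivity
  set Vr : ℝ := ∑ a, SWAux.pp P a * ((SWAux.Z P a - SWAux.hZ P) * (SWAux.Z P a - SWAux.hZ P))
    with hVrdef
  have hVr0 : 0 ≤ Vr :=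
    Finset.sum_nonneg fun a _ => mul_nonneg (SWAux.pp_nonneg P a) (mul_self_nonneg _)
  set B : ℝ := max (2 * Vr / (ε * η ^ 2))
    (max ((-Real.log (ε / 2)) * 4 / (δ * L)) (2 * Real.log 2 / (δ * L))) with hBdef
  refine ⟨⌈B⌉₊ + 1, fun m hm => ?_⟩
  set n := t * 2 ^ m with hndef
  have hn : 0 < n := by positivity
  have hnR : (0:ℝ) < n := by exact_mod_cast hn
  have hnB : B < (n : ℝ) := by
    have h1 : (⌈B⌉₊ + 1 : ℕ) < 2 ^ (⌈B⌉₊ + 1) := Nat.lt_two_pow_self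
    have h2 : 2 ^ (⌈B⌉₊ + 1) ≤ 2 ^ m := Nat.pow_le_pow_right (by norm_num) hm
    have h3 : 2 ^ m ≤ n := Nat.le_mul_of_pos_left _ ht
    have h4 : (⌈B⌉₊ + 1 : ℕ) ≤ n := le_of_lt (lt_of_lt_of_le h1 (le_trans h2 h3))
    calc B ≤ (⌈B⌉₊ : ℝ) := Nat.le_ceil B
      _ < ((⌈B⌉₊ + 1 : ℕ) : ℝ) := by exact_mod_cast Nat.lt_succ_self _
      _ ≤ (n : ℝ) := by exact_mod_cast h4
  have hB1 : 2 * Vr / (ε * η ^ 2) < (n:ℝ) := lt_of_le_of_lt (le_max_left _ _) hnB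
  have big1 : Vr / ((n:ℝ) * η ^ 2) < ε / 2 := by
    rw [div_lt_iff₀ (by positivity)]
    have h := (div_lt_iff₀ (by positivity : (0:ℝ) < ε * η ^ 2)).1 hB1
    nlinarith
  have hB2 : (-Real.log (ε / 2)) * 4 / (δ * L) < (n:ℝ) :=
    lt_of_le_of_lt (le_trans (le_max_left _ _) (le_max_right _ _)) hnB
  have big2 : Real.exp (-((n:ℝ) * (δ * L / 4))) < ε / 2 := by
    have hεpos : (0:ℝ) < ε / 2 := by positivity
    rw [← Real.exp_log hεpos]
    apply Real.exp_lt_exp.2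
    have h := (div_lt_iff₀ (by positivity : (0:ℝ) < δ * L)).1 hB2
    nlinarith
  have hB3 : 2 * Real.log 2 / (δ * L) < (n:ℝ) :=
    lt_of_le_of_lt (le_trans (le_max_right _ _) (le_max_right _ _)) hnB
  have big3 : Real.log 2 < (n:ℝ) * (δ * L / 2) := by
    have h := (div_lt_iff₀ (by positivity : (0:ℝ) < δ * L)).1 hB3
    nlinarith
  exact SWAux.main_n P hε hδ n hn big1 big2 big3
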